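/- If x is a squarefree positive integer and d is a positive integer with d ∣ x^{k}, then d admits a factorisation d = d_1 · d_2^2 · ⋯ · d_k^k where d_1, …, d_k are squarefree, pairwise coprime positive integers with d_1 ⋯ d_k ∣ x. -/
import Mathlib

lemma squarefree_prod_primes_aux {s : Finset ℕ} (hs : ∀ p ∈ s, p.Prime) :
    Squarefree (∏ p ∈ s, p) := by
  classical
  induction s using Finset.induction with
  | empty => simp only [Finset.prod_empty]; exact squarefree_one
  | @insert a s ha ih =>
    have hap : a.Prime := hs a (Finset.mem_insert_self a s)
    have hcop : Nat.Coprime a (∏ p ∈ s, p) := by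
      rw [Nat.coprime_prod_right_iff]
      intro q hq
      exact (Nat.coprime_primes hap (hs q (Finset.mem_insert_of_mem hq))).2
        (fun h => ha (h ▸ hq))
    rw [Finset.prod_insert ha, Nat.squarefree_mul hcop]
    exact ⟨hap.squarefree, ih fun p hp => hs p (Finset.mem_insert_of_mem hp)⟩

/-- If `x` is squarefree and `d ∣ x^k` then `d = d_1 * d_2^2 * ⋯ * d_k^k` with
the `d_i` squarefree, pairwise coprime, and `d_1 ⋯ d_k ∣ x`. -/
theorem divisor_of_squarefree_power_factorisation (k : ℕ) (hk : 1 ≤ k)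
    (x : ℕ) (hx : Squarefree x) (hx0 : 0 < x) (d : ℕ) (hd0 : 0 < d) (hd : d ∣ x ^ k) :
    ∃ D : Fin k → ℕ, (∀ i, Squarefree (D i)) ∧
      (∀ i j : Fin k, i ≠ j → Nat.Coprime (D i) (D j)) ∧
      d = ∏ i : Fin k, (D i) ^ ((i : ℕ) + 1) ∧
      (∏ i : Fin k, D i) ∣ x := by
  classical
  have hd0' : d ≠ 0 := hd0.ne'
  set S := d.primeFactors with hSdef
  -- bounds on exponents
  have hlow : ∀ p ∈ S, 1 ≤ d.factorization p := by
    intro p hp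
    exact Nat.Prime.factorization_pos_of_dvd (Nat.prime_of_mem_primeFactors hp) hd0'
      (Nat.dvd_of_mem_primeFactors hp)
  have hhigh : ∀ p ∈ S, d.factorization p ≤ k := by
    intro p hp
    have h1 : d.factorization ≤ (x ^ k).factorization :=
      (Nat.factorization_le_iff_dvd hd0' (by positivity)).2 hd
    have h2 := h1 p
    rw [Nat.factorization_pow] at h2
    have h3 : x.factorization p ≤ 1 := hx.natFactorization_le_one p
    calc d.factorization p ≤ k * x.factorization p := h2
      _ ≤ k * 1 := Nat.mul_le_mul_left k h3
      _ = k := Nat.mul_one k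
  -- the map sending a prime to its fiber index
  set g : ℕ → Fin k := fun p => ⟨min (d.factorization p - 1) (k - 1), by
    have : k - 1 < k := Nat.sub_lt (lt_of_lt_of_le one_pos hk) one_pos
    exact lt_of_le_of_lt (min_le_right _ _) this⟩ with hg
  have hgmem : ∀ p ∈ S, g p ∈ (Finset.univ : Finset (Fin k)) := fun _ _ => Finset.mem_univ _
  have hgval : ∀ p ∈ S, ∀ i : Fin k, (g p = i ↔ d.factorization p = (i : ℕ) + 1) := by
    intro p hp i
    have h1 := hlow p hp
    have h2 := hhigh p hp
    constructor
    · intro h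
      have : min (d.factorization p - 1) (k - 1) = (i : ℕ) := congrArg Fin.val h
      rw [min_eq_left (by omega)] at this
      omega
    · intro h
      apply Fin.ext
      show min (d.factorization p - 1) (k - 1) = (i : ℕ)
      have : (i : ℕ) < k := i.isLt
      rw [h]
      omega
  set D : Fin k → ℕ := fun i => ∏ p ∈ S.filter (fun p => d.factorization p = (i : ℕ) + 1), p
    with hD
  have hfilter : ∀ i : Fin k,
      S.filter (fun p => d.factorization p = (i : ℕ) + 1) = S.filter (fun p => g p = i) := by
    intro i
    apply Finset.filter_congr
    intro p hp
    simp [hgval p hp i]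
  have hprimes : ∀ i : Fin k, ∀ p ∈ S.filter (fun p => d.factorization p = (i : ℕ) + 1),
      p.Prime := fun i p hp => Nat.prime_of_mem_primeFactors (Finset.mem_of_mem_filter p hp)
  refine ⟨D, ?_, ?_, ?_, ?_⟩
  · intro i
    exact squarefree_prod_primes_aux (hprimes i)
  · intro i j hij
    rw [hD]
    rw [Nat.coprime_prod_left_iff]
    intro p hp
    rw [Nat.coprime_prod_right_iff]
    intro q hq
    have hpp := hprimes i p hp
    have hqq := hprimes j q hq
    refine (Nat.coprime_primes hpp hqq).2 ?_
    intro hpq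
    apply hij
    have h1 := (Finset.mem_filter.1 hp).2
    have h2 := (Finset.mem_filter.1 hq).2
    rw [hpq] at h1
    exact Fin.ext (by omega)
  · have key : ∏ i : Fin k, (D i) ^ ((i : ℕ) + 1)
        = ∏ p ∈ S, p ^ d.factorization p := by
      have : ∀ i : Fin k, (D i) ^ ((i : ℕ) + 1)
          = ∏ p ∈ S.filter (fun p => g p = i), p ^ d.factorization p := by
        intro i
        rw [hD, ← Finset.prod_pow, hfilter i]
        apply Finset.prod_congr rfl
        intro p hp
        have := (Finset.mem_filter.1 hp).2
        have hpS := (Finset.mem_filter.1 hp).1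
        rw [(hgval p hpS i).1 this]
      rw [Finset.prod_congr rfl (fun i _ => this i)]
      exact Finset.prod_fiberwise_of_maps_to hgmem _
    rw [key, hSdef, ← Nat.prod_factorization_eq_prod_primeFactors,
      Nat.factorization_prod_pow_eq_self hd0']
  · have key : ∏ i : Fin k, D i = ∏ p ∈ S, p := by
      simp only [hD, hfilter]
      exact Finset.prod_fiberwise_of_maps_to hgmem _
    rw [key]
    have hsub : S ⊆ x.primeFactors := by
      intro p hp
      have hpp := Nat.prime_of_mem_primeFactors hp
      have : p ∣ x ^ k := (Nat.dvd_of_mem_primeFactors hp).trans hd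
      exact Nat.mem_primeFactors.2 ⟨hpp, hpp.dvd_of_dvd_pow this, hx0.ne'⟩
    calc (∏ p ∈ S, p) ∣ ∏ p ∈ x.primeFactors, p :=
          Finset.prod_dvd_prod_of_subset _ _ _ hsub
      _ = x := Nat.prod_primeFactors_of_squarefree hx
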